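/- arXiv:0910.0483 — 3 statements merged into one kernel-verified Lean document; each statement's English description precedes it below -/
import Mathlib

section
/- Let ξ be a probability measure on a finite set M, and for each μ ∈ M let μ(x) ≥ 0 denote the likelihood of a fixed observation x. Define the marginal likelihood ξ(x) = Σ_μ μ(x) ξ(μ), assumed positive, and the posterior ξ'(μ) = μ(x) ξ(μ) / ξ(x). Then the posterior marginal likelihood satisfies ξ'(x) = Σ_μ μ(x) ξ'(μ) ≥ ξ(x). -/
open scoped NNReal

theorem stmt0 {M : Type*} [Fintype M] (ξ L : M → ℝ≥0)
    (hξ : ∑ μ, ξ μ = 1) (hm : 0 < ∑ μ, L μ * ξ μ) :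
    ∑ μ, L μ * (L μ * ξ μ / (∑ ν, L ν * ξ ν)) ≥ ∑ μ, L μ * ξ μ := by
  set S := ∑ μ, L μ * ξ μ with hS
  have hcs : (∑ μ, L μ * ξ μ) ^ 2 ≤ (∑ μ, L μ * (L μ * ξ μ)) * ∑ μ, ξ μ := by
    refine Finset.sum_sq_le_sum_mul_sum_of_sq_eq_mul _ (fun i _ => zero_le)
      (fun i _ => zero_le) (fun i _ => by ring)
  rw [hξ, mul_one] at hcs
  have key : S * S ≤ ∑ μ, L μ * (L μ * ξ μ) := by simpa [sq] using hcs
  calc ∑ μ, L μ * (L μ * ξ μ / S) = (∑ μ, L μ * (L μ * ξ μ)) / S := by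
        simp [Finset.sum_div, mul_div_assoc]
    _ ≥ S := by
        rw [ge_iff_le, le_div_iff₀ hm]
        exact key
end

section
/- With the setup of the previous statement (finite M, repeated Bayesian updates on the same observation with likelihood L), the sequence m_n = Σ_μ L(μ)ξ_n(μ) converges to max{L(μ) : μ ∈ supp(ξ)}. -/
theorem stmt5 {M : Type*} [Fintype M] (ξ L : M → ℝ)
    (hξ0 : ∀ μ, 0 ≤ ξ μ) (hξ1 : ∑ μ, ξ μ = 1) (hL : ∀ μ, 0 ≤ L μ)
    (hm : 0 < ∑ μ, L μ * ξ μ)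
    (ξseq : ℕ → M → ℝ) (h0 : ξseq 0 = ξ)
    (hrec : ∀ n μ, ξseq (n + 1) μ = L μ * ξseq n μ / ∑ ν, L ν * ξseq n ν) :
    Filter.Tendsto (fun n => ∑ μ, L μ * ξseq n μ) Filter.atTop
      (nhds (⨆ μ : {μ : M // 0 < ξ μ}, L μ)) := by
  classical
  obtain ⟨μs, hμs⟩ : ∃ μ, 0 < L μ * ξ μ := by
    by_contra h
    push_neg at h
    have : ∑ μ, L μ * ξ μ ≤ 0 := Finset.sum_nonpos (fun μ _ => h μ)
    linarith
  have hξs : 0 < ξ μs := by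
    rcases mul_pos_iff.mp hμs with ⟨h1, h2⟩ | ⟨h1, h2⟩
    · exact h2
    · exact absurd h1 (not_lt.mpr (hL μs))
  have hLs : 0 < L μs := by
    rcases mul_pos_iff.mp hμs with ⟨h1, h2⟩ | ⟨h1, h2⟩
    · exact h1
    · exact absurd h1 (not_lt.mpr (hL μs))
  haveI : Nonempty {μ : M // 0 < ξ μ} := ⟨⟨μs, hξs⟩⟩
  set Lmax := ⨆ μ : {μ : M // 0 < ξ μ}, L μ with hLmaxdef
  have hbdd : BddAbove (Set.range fun μ : {μ : M // 0 < ξ μ} => L (μ : M)) :=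
    Set.Finite.bddAbove (Set.finite_range _)
  have hub : ∀ μ, 0 < ξ μ → L μ ≤ Lmax := fun μ hμ => le_ciSup hbdd ⟨μ, hμ⟩
  obtain ⟨μ0, hμ0⟩ := Finite.exists_max (fun μ : {μ : M // 0 < ξ μ} => L (μ : M))
  have hLmax_eq : Lmax = L (μ0 : M) :=
    le_antisymm (ciSup_le hμ0) (hub _ μ0.2)
  have hLmax_pos : 0 < Lmax := lt_of_lt_of_le hLs (hub μs hξs)
  set S : ℕ → ℝ := fun n => ∑ μ, L μ ^ n * ξ μ with hSdef
  have hSpos : ∀ n, 0 < S n := by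
    intro n
    have h1 : L μs ^ n * ξ μs ≤ S n :=
      Finset.single_le_sum (f := fun μ => L μ ^ n * ξ μ)
        (fun μ _ => mul_nonneg (pow_nonneg (hL μ) n) (hξ0 μ)) (Finset.mem_univ μs)
    have h2 : 0 < L μs ^ n * ξ μs := mul_pos (pow_pos hLs n) hξs
    linarith
  have hseq : ∀ n μ, ξseq n μ = L μ ^ n * ξ μ / S n := by
    intro n
    induction n with
    | zero => intro μ; simp [h0, hSdef, hξ1]
    | succ n ih =>
      intro μ
      have hsum : ∑ ν, L ν * ξseq n ν = S (n + 1) / S n := by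
        simp only [ih, hSdef, mul_div_assoc']
        rw [← Finset.sum_div]
        congr 1
        exact Finset.sum_congr rfl fun ν _ => by ring
      rw [hrec, ih μ, hsum]
      have h1 := (hSpos n).ne'
      have h2 := (hSpos (n + 1)).ne'
      have h3 : S (1 + n) ≠ 0 := by rw [add_comm]; exact h2
      field_simp
      ring
  have hmeq : ∀ n, ∑ μ, L μ * ξseq n μ = S (n + 1) / S n := by
    intro n
    simp only [hseq, hSdef, mul_div_assoc']
    rw [← Finset.sum_div]
    congr 1
    exact Finset.sum_congr rfl fun ν _ => by ring
  set T : ℕ → ℝ := fun n => ∑ μ, (L μ / Lmax) ^ n * ξ μ with hTdef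
  have hST : ∀ n, S n = T n * Lmax ^ n := by
    intro n
    simp only [hSdef, hTdef, Finset.sum_mul]
    apply Finset.sum_congr rfl
    intro μ _
    rw [div_pow]
    field_simp
  have hTpos : ∀ n, 0 < T n := by
    intro n
    have h := hSpos n
    rw [hST n] at h
    by_contra hle
    push_neg at hle
    nlinarith [pow_pos hLmax_pos n]
  set c : ℝ := ∑ μ, (if Lmax ≤ L μ then ξ μ else 0) with hcdef
  have hcpos : 0 < c := by
    have h1 : (if Lmax ≤ L (μ0 : M) then ξ (μ0 : M) else 0) ≤ c :=
      Finset.single_le_sum (f := fun μ => if Lmax ≤ L μ then ξ μ else 0)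
        (fun μ _ => by by_cases h : Lmax ≤ L μ <;> simp [h, hξ0 μ]) (Finset.mem_univ (μ0 : M))
    rw [if_pos hLmax_eq.le] at h1
    exact lt_of_lt_of_le μ0.2 h1
  have hTc : Filter.Tendsto T Filter.atTop (nhds c) := by
    rw [hTdef, hcdef]
    apply tendsto_finset_sum
    intro μ _
    rcases eq_or_lt_of_le (hξ0 μ) with hz | hp
    · have : (fun n => (L μ / Lmax) ^ n * ξ μ) = fun _ => (0 : ℝ) := by
        funext n; rw [← hz, mul_zero]
      rw [this, ← hz]
      simp only [ite_self]
      exact tendsto_const_nhds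
    · have hle : L μ ≤ Lmax := hub μ hp
      rcases eq_or_lt_of_le hle with heq | hlt
      · simp only [heq, div_self hLmax_pos.ne', one_pow, one_mul, if_pos le_rfl]
        exact tendsto_const_nhds
      · rw [if_neg (not_le.mpr hlt)]
        have h0' : 0 ≤ L μ / Lmax := div_nonneg (hL μ) hLmax_pos.le
        have h1' : L μ / Lmax < 1 := (div_lt_one hLmax_pos).mpr hlt
        have := (tendsto_pow_atTop_nhds_zero_of_lt_one h0' h1').mul_const (ξ μ)
        simpa using this
  have hTc' : Filter.Tendsto (fun n => T (n + 1)) Filter.atTop (nhds c) :=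
    hTc.comp (Filter.tendsto_add_atTop_nat 1)
  have hfin : Filter.Tendsto (fun n => T (n + 1) * Lmax / T n) Filter.atTop
      (nhds Lmax) := by
    have := (hTc'.mul_const Lmax).div hTc hcpos.ne'
    have hval : c * Lmax / c = Lmax := by field_simp
    rwa [hval] at this
  have hfun : (fun n => ∑ μ, L μ * ξseq n μ) = fun n => T (n + 1) * Lmax / T n := by
    funext n
    rw [hmeq n, hST n, hST (n + 1), pow_succ]
    have h1 := (hTpos n).ne'
    have h2 := (pow_pos hLmax_pos n).ne'
    field_simp
  rw [hfun]
  exact hfin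
end

section
/- Equality characterization for Lemma 1 in the discrete case: for a finite model set M, prior ξ with full support, and likelihoods L : M → ℝ≥0 with Σ L(μ)ξ(μ) > 0, the posterior marginal satisfies ξ'(x) = ξ(x) if and only if L is constant on M. -/
theorem stmt19 {M : Type*} [Fintype M] (ξ L : M → ℝ)
    (hξ0 : ∀ μ, 0 < ξ μ) (hξ1 : ∑ μ, ξ μ = 1) (hL : ∀ μ, 0 ≤ L μ)
    (hm : 0 < ∑ μ, L μ * ξ μ) :
    (∑ μ, L μ * (L μ * ξ μ / ∑ ν, L ν * ξ ν)) = ∑ μ, L μ * ξ μ ↔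
      ∀ μ ν : M, L μ = L ν := by
  set Z : ℝ := ∑ ν, L ν * ξ ν with hZ
  have hZpos : 0 < Z := hm
  have hsum : ∑ μ, L μ * (L μ * ξ μ / Z) = (∑ μ, L μ * (L μ * ξ μ)) / Z := by
    rw [Finset.sum_div]
    exact Finset.sum_congr rfl fun μ _ => (mul_div_assoc _ _ _).symm
  have hvar : ∑ μ, ξ μ * (L μ - Z) ^ 2 = (∑ μ, L μ * (L μ * ξ μ)) - Z ^ 2 := by
    calc ∑ μ, ξ μ * (L μ - Z) ^ 2
        = ∑ μ, (L μ * (L μ * ξ μ) - 2 * Z * (L μ * ξ μ) + Z ^ 2 * ξ μ) :=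
          Finset.sum_congr rfl fun μ _ => by ring
      _ = (∑ μ, L μ * (L μ * ξ μ)) - 2 * Z * Z + Z ^ 2 * 1 := by
          rw [Finset.sum_add_distrib, Finset.sum_sub_distrib, ← Finset.mul_sum,
            ← Finset.mul_sum, ← hZ, hξ1]
      _ = (∑ μ, L μ * (L μ * ξ μ)) - Z ^ 2 := by ring
  constructor
  · intro h μ ν
    rw [hsum, div_eq_iff (ne_of_gt hZpos)] at h
    have h0 : ∑ μ, ξ μ * (L μ - Z) ^ 2 = 0 := by
      rw [hvar, h]; ring
    have hterm : ∀ μ, L μ = Z := by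
      intro μ
      have := (Finset.sum_eq_zero_iff_of_nonneg (fun i _ =>
        mul_nonneg (hξ0 i).le (sq_nonneg _))).mp h0 μ (Finset.mem_univ μ)
      have h2 : (L μ - Z) ^ 2 = 0 := by
        rcases mul_eq_zero.mp this with h' | h'
        · exact absurd h' (ne_of_gt (hξ0 μ))
        · exact h'
      have := pow_eq_zero_iff (n := 2) (by norm_num) |>.mp h2
      linarith
    rw [hterm μ, hterm ν]
  · intro h
    have hc : ∀ μ, L μ = Z := by
      intro μ
      have : Z = ∑ ν, L μ * ξ ν := Finset.sum_congr rfl fun ν _ => by rw [h μ ν]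
      rw [this, ← Finset.mul_sum, hξ1, mul_one]
    rw [hsum, div_eq_iff (ne_of_gt hZpos)]
    calc ∑ μ, L μ * (L μ * ξ μ) = ∑ μ, Z * Z * ξ μ :=
          Finset.sum_congr rfl fun μ _ => by rw [hc μ]; ring
      _ = Z * Z := by rw [← Finset.mul_sum, hξ1, mul_one]
end
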